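/- arXiv:1106.4104 — 2 statements merged into one kernel-verified Lean document; each statement's English description precedes it below -/
import Mathlib

section
/- With ε, δ and the bracket [·,·] as fixed, the map (x, y) ↦ [x, y] is continuous on the set {(x, y) ∈ M × M : dist(x, y) < δ}. -/
open Set Filter Metric Topology

variable {M : Type*} [MetricSpace M] [CompactSpace M]

/-- `f` is expansive with expansivity constant `ρ`: if two orbits stay `ρ`-close for all
integer times, the points coincide. -/
def IsExpansiveWith (f : Equiv.Perm M) (ρ : ℝ) : Prop :=
  ∀ x y : M, (∀ n : ℤ, dist ((f ^ n) x) ((f ^ n) y) ≤ ρ) → x = y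

/-- The stable set `W^s(x)`. -/
def stableSet (f : Equiv.Perm M) (x : M) : Set M :=
  {y : M | Tendsto (fun n : ℤ => dist ((f ^ n) x) ((f ^ n) y)) atTop (𝓝 0)}

/-- The unstable set `W^u(x)`. -/
def unstableSet (f : Equiv.Perm M) (x : M) : Set M :=
  {y : M | Tendsto (fun n : ℤ => dist ((f ^ n) x) ((f ^ n) y)) atBot (𝓝 0)}

/-- The `ε`-stable set `W^s_ε(x)`. -/
def epsStable (f : Equiv.Perm M) (ε : ℝ) (x : M) : Set M :=
  {y : M | ∀ n : ℤ, 0 ≤ n → dist ((f ^ n) x) ((f ^ n) y) ≤ ε}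

/-- The `ε`-unstable set `W^u_ε(x)`. -/
def epsUnstable (f : Equiv.Perm M) (ε : ℝ) (x : M) : Set M :=
  {y : M | ∀ n : ℤ, n ≤ 0 → dist ((f ^ n) x) ((f ^ n) y) ≤ ε}

/-- Shadowing property: every `δ`-pseudo-orbit is `ε`-shadowed by a true orbit. -/
def HasShadowing (f : Equiv.Perm M) : Prop :=
  ∀ ε : ℝ, 0 < ε → ∃ δ : ℝ, 0 < δ ∧ ∀ y : ℤ → M,
    (∀ n : ℤ, dist (f (y n)) (y (n + 1)) < δ) →
      ∃ z : M, ∀ n : ℤ, dist ((f ^ n) z) (y n) ≤ ε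

/-- A rectangle: a nonempty set of diameter `< δ` closed under the bracket operation. -/
def IsRectangle (δ : ℝ) (br : M → M → M) (R : Set M) : Prop :=
  R.Nonempty ∧ Metric.diam R < δ ∧ ∀ x ∈ R, ∀ y ∈ R, br x y ∈ R

/-- Stable border `∂^s R`: points of `R` that are not interior points of
`W^u(x,R) = W^u_ε(x) ∩ R` in the subspace topology of `W^u_ε(x)`. -/
def stableBorder (f : Equiv.Perm M) (ε : ℝ) (R : Set M) : Set M :=
  {x : M | x ∈ R ∧ ¬ ∃ U : Set M, IsOpen U ∧ x ∈ U ∧ U ∩ epsUnstable f ε x ⊆ R}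

/-- Unstable border `∂^u R`: points of `R` that are not interior points of
`W^s(x,R) = W^s_ε(x) ∩ R` in the subspace topology of `W^s_ε(x)`. -/
def unstableBorder (f : Equiv.Perm M) (ε : ℝ) (R : Set M) : Set M :=
  {x : M | x ∈ R ∧ ¬ ∃ U : Set M, IsOpen U ∧ x ∈ U ∧ U ∩ epsStable f ε x ⊆ R}

/-- A Markov partition: a finite family of proper rectangles covering `M`, with pairwise
disjoint interiors, satisfying the Markov inclusions for the invariant fibers. -/
def IsMarkovPartition (f : Equiv.Perm M) (ε δ : ℝ) (br : M → M → M) {m : ℕ}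
    (R : Fin m → Set M) : Prop :=
  (∀ i, IsRectangle δ br (R i)) ∧
  (∀ i, R i = closure (interior (R i))) ∧
  (⋃ i, R i) = Set.univ ∧
  (∀ i j, i ≠ j → interior (R i) ∩ interior (R j) = ∅) ∧
  ∀ i j, ∀ x ∈ interior (R i) ∩ ⇑f ⁻¹' interior (R j),
    ⇑f '' (epsStable f ε x ∩ R i) ⊆ epsStable f ε (f x) ∩ R j ∧
    epsUnstable f ε (f x) ∩ R j ⊆ ⇑f '' (epsUnstable f ε x ∩ R i)


omit [CompactSpace M] in
lemma cont_zpow (f : Equiv.Perm M) (hf : Continuous ⇑f) (hf' : Continuous ⇑f.symm)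
    (n : ℤ) : Continuous ⇑(f ^ n) := by
  induction n using Int.induction_on with
  | zero => simpa using continuous_id
  | succ k ih =>
      have h : (f ^ ((k : ℤ) + 1)) = f ^ (k : ℤ) * f := zpow_add_one f k
      rw [h]
      exact (ih.comp hf : Continuous fun x => (f ^ (k:ℤ)) (f x))
  | pred k ih =>
      have h : (f ^ (-(k : ℤ) - 1)) = f ^ (-(k : ℤ)) * f⁻¹ := zpow_sub_one f (-k)
      rw [h]
      have h1 : ⇑(f⁻¹) = ⇑f.symm := rfl
      exact (ih.comp (h1 ▸ hf') : Continuous fun x => (f ^ (-(k:ℤ))) (f⁻¹ x))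

lemma closed_graph_cont {X : Type*} [TopologicalSpace X] (g : X → M)
    (hg : IsClosed {q : X × M | q.2 = g q.1}) : Continuous g := by
  rw [continuous_iff_isClosed]
  intro C hC
  have key : g ⁻¹' C = Prod.fst '' ({q : X × M | q.2 = g q.1} ∩ (univ ×ˢ C)) := by
    ext x
    constructor
    · intro hx; exact ⟨(x, g x), ⟨rfl, trivial, hx⟩, rfl⟩
    · rintro ⟨⟨a, b⟩, ⟨hgr, -, hb⟩, rfl⟩
      simp only [Set.mem_setOf_eq] at hgr; simpa [← hgr] using hb
  rw [key]
  exact isClosedMap_fst_of_compactSpace _ (hg.inter (isClosed_univ.prod hC))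

/-- With `ε`, `δ` and the bracket `[·,·]` fixed as in the standing assumptions,
the map `(x, y) ↦ [x, y]` is continuous on `{(x, y) : dist x y < δ}`. -/
theorem stmt_3 (f : Equiv.Perm M) (hf : Continuous ⇑f) (hf' : Continuous ⇑f.symm)
    (ρ ε δ : ℝ) (hρ : 0 < ρ) (hexp : IsExpansiveWith f ρ)
    (hε0 : 0 < ε) (hε : ε ≤ ρ / 4) (hδ : 0 < δ) (br : M → M → M)
    (hbr : ∀ x y : M, dist x y < δ → epsStable f ε x ∩ epsUnstable f ε y = {br x y}) :
    ContinuousOn (fun p : M × M => br p.1 p.2) {p : M × M | dist p.1 p.2 < δ} := by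
  set S : Set ((M × M) × M) :=
    {q : (M × M) × M | q.2 ∈ epsStable f ε q.1.1 ∩ epsUnstable f ε q.1.2} with hSdef
  have hS : IsClosed S := by
    have hrw : S =
        ⋂ n : ℤ, ({q : (M × M) × M | 0 ≤ n → dist ((f ^ n) q.1.1) ((f ^ n) q.2) ≤ ε} ∩
          {q : (M × M) × M | n ≤ 0 → dist ((f ^ n) q.1.2) ((f ^ n) q.2) ≤ ε}) := by
      ext q
      simp only [hSdef, Set.mem_setOf_eq, Set.mem_inter_iff, Set.mem_iInter, epsStable,
        epsUnstable, ← forall_and]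
    rw [hrw]
    refine isClosed_iInter fun n => IsClosed.inter ?_ ?_
    · by_cases h : (0 : ℤ) ≤ n
      · have : {q : (M × M) × M | 0 ≤ n → dist ((f ^ n) q.1.1) ((f ^ n) q.2) ≤ ε} =
            {q : (M × M) × M | dist ((f ^ n) q.1.1) ((f ^ n) q.2) ≤ ε} := by
          simp [h]
        rw [this]
        exact isClosed_le (Continuous.dist
          ((cont_zpow f hf hf' n).comp (continuous_fst.comp continuous_fst))
          ((cont_zpow f hf hf' n).comp continuous_snd)) continuous_const
      · have : {q : (M × M) × M | 0 ≤ n → dist ((f ^ n) q.1.1) ((f ^ n) q.2) ≤ ε} =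
            Set.univ := by
          simp [h]
        rw [this]; exact isClosed_univ
    · by_cases h : n ≤ 0
      · have : {q : (M × M) × M | n ≤ 0 → dist ((f ^ n) q.1.2) ((f ^ n) q.2) ≤ ε} =
            {q : (M × M) × M | dist ((f ^ n) q.1.2) ((f ^ n) q.2) ≤ ε} := by
          simp [h]
        rw [this]
        exact isClosed_le (Continuous.dist
          ((cont_zpow f hf hf' n).comp (continuous_snd.comp continuous_fst))
          ((cont_zpow f hf hf' n).comp continuous_snd)) continuous_const
      · have : {q : (M × M) × M | n ≤ 0 → dist ((f ^ n) q.1.2) ((f ^ n) q.2) ≤ ε} =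
            Set.univ := by
          simp [h]
        rw [this]; exact isClosed_univ
  set s : Set (M × M) := {p : M × M | dist p.1 p.2 < δ} with hsdef
  rw [continuousOn_iff_continuous_restrict]
  apply closed_graph_cont
  have key : {q : ↥s × M | q.2 = s.domRestrict (fun p : M × M => br p.1 p.2) q.1} =
      (fun q : ↥s × M => (((q.1 : M × M)), q.2)) ⁻¹' S := by
    ext ⟨⟨p, hp⟩, z⟩
    have hb := hbr p.1 p.2 hp
    simp only [Set.mem_setOf_eq, Set.domRestrict_apply, Set.mem_preimage, hSdef, hb,
      Set.mem_singleton_iff]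
  rw [key]
  exact hS.preimage ((continuous_subtype_val.comp continuous_fst).prodMk continuous_snd)
end

section
/- Let R_1, …, R_m be a Markov partition for f of diameter less than ρ, with transition matrix A. Then: (1) for every a ∈ Σ_A, the intersection ⋂_{j∈ℤ} f^{-j}(R_{a_j}) consists of exactly one point, denoted π(a); (2) the resulting map π : Σ_A → M is continuous, surjective, and satisfies π ∘ σ = f ∘ π; (3) π is injective over points whose orbit avoids the border of the partition: if π(a) = π(a') and f^n(π(a)) ∉ ⋃_{i=1}^m ∂R_i for all n ∈ ℤ (∂R_i the topological frontier), then a = a'. -/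
open Set Filter Metric Topology

variable {M : Type*} [MetricSpace M] [CompactSpace M]

set_option linter.unusedSectionVars false

section Stmt19Aux

lemma perm_zpow_apply_add_one (f : Equiv.Perm M) (k : ℤ) (x : M) :
    (f ^ (k+1)) x = (f ^ k) (f x) := by rw [zpow_add_one]; rfl

lemma perm_zpow_apply_sub_one (f : Equiv.Perm M) (k : ℤ) (x : M) :
    (f ^ (k-1)) x = (f ^ k) (f.symm x) := by rw [zpow_sub_one]; rfl

lemma perm_zpow_apply_one_add (f : Equiv.Perm M) (k : ℤ) (x : M) :
    (f ^ (k+1)) x = f ((f ^ k) x) := by rw [add_comm k 1, zpow_add, zpow_one]; rfl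

lemma perm_zpow_apply_add (f : Equiv.Perm M) (i j : ℤ) (x : M) :
    (f ^ (i+j)) x = (f ^ i) ((f ^ j) x) := by rw [zpow_add]; rfl

lemma perm_zpow_continuous (f : Equiv.Perm M) (hf : Continuous f) (hf' : Continuous f.symm)
    (n : ℤ) : Continuous ⇑(f ^ n) := by
  induction n using Int.induction_on with
  | zero => simpa using continuous_id
  | succ k ih =>
      have h : ⇑(f ^ ((k:ℤ)+1)) = ⇑(f ^ (k:ℤ)) ∘ ⇑f := funext fun x => perm_zpow_apply_add_one f k x
      rw [h]; exact ih.comp hf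
  | pred k ih =>
      have h : ⇑(f ^ (-(k:ℤ)-1)) = ⇑(f ^ (-(k:ℤ))) ∘ ⇑f.symm :=
        funext fun x => perm_zpow_apply_sub_one f _ x
      rw [h]; exact ih.comp hf'

section Aux

variable {f : Equiv.Perm M} {ρ ε δ : ℝ} {br : M → M → M} {m : ℕ} {R : Fin m → Set M}

lemma br_mem (hbr : ∀ x y : M, dist x y < δ → epsStable f ε x ∩ epsUnstable f ε y = {br x y})
    {x y : M} (h : dist x y < δ) :
    br x y ∈ epsStable f ε x ∧ br x y ∈ epsUnstable f ε y := by
  have h1 : br x y ∈ epsStable f ε x ∩ epsUnstable f ε y := by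
    rw [hbr x y h]; exact rfl
  exact ⟨h1.1, h1.2⟩

lemma expansive2 (hexp : IsExpansiveWith f ρ) (hρ : 0 < ρ) (hε : ε ≤ ρ/4) {x y : M}
    (h : ∀ k : ℤ, dist ((f ^ k) x) ((f ^ k) y) ≤ 2*ε) : x = y :=
  hexp x y fun k => le_trans (h k) (by linarith)

lemma rect_closed (hMP : IsMarkovPartition f ε δ br R) (i : Fin m) : IsClosed (R i) := by
  rw [hMP.2.1 i]; exact isClosed_closure

lemma rect_dist_lt (hMP : IsMarkovPartition f ε δ br R) {i : Fin m} {x y : M}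
    (hx : x ∈ R i) (hy : y ∈ R i) : dist x y < δ :=
  lt_of_le_of_lt
    (Metric.dist_le_diam_of_mem ((isCompact_univ.isBounded).subset (subset_univ _)) hx hy)
    (hMP.1 i).2.1

lemma rect_dist_le_rho (hdiam : ∀ i, Metric.diam (R i) < ρ) {i : Fin m} {x y : M}
    (hx : x ∈ R i) (hy : y ∈ R i) : dist x y ≤ ρ :=
  le_trans
    (Metric.dist_le_diam_of_mem ((isCompact_univ.isBounded).subset (subset_univ _)) hx hy)
    (le_of_lt (hdiam i))

end Aux

section Main

variable {f : Equiv.Perm M} {ρ ε δ : ℝ} {br : M → M → M} {m : ℕ} {R : Fin m → Set M}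

lemma exists_word_realizer
    (hexp : IsExpansiveWith f ρ) (hρ : 0 < ρ) (hε : ε ≤ ρ/4)
    (hbr : ∀ x y : M, dist x y < δ → epsStable f ε x ∩ epsUnstable f ε y = {br x y})
    (hMP : IsMarkovPartition f ε δ br R)
    (a : ℕ → Fin m) (n : ℕ)
    (hadm : ∀ j, j < n → (interior (R (a j)) ∩ ⇑f ⁻¹' interior (R (a (j+1)))).Nonempty) :
    ∃ x : M, ∀ j : ℕ, j ≤ n → (f ^ (j:ℤ)) x ∈ R (a j) := by
  have hMark := hMP.2.2.2.2
  have main : ∀ N : ℕ, (∀ j, j < N → (interior (R (a j)) ∩ ⇑f ⁻¹' interior (R (a (j+1)))).Nonempty) →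
      ∃ D : Set M, D.Nonempty ∧
        (∀ x ∈ D, ∀ j : ℕ, j ≤ N → (f ^ (-(j:ℤ))) x ∈ R (a (N - j))) ∧
        (∀ x ∈ D, ∀ ζ, ζ ∈ epsUnstable f ε x → ζ ∈ R (a N) → ζ ∈ D) := by
    intro N
    induction N with
    | zero =>
        intro _
        exact ⟨R (a 0), (hMP.1 (a 0)).1,
          fun x hx j hj => by
            interval_cases j
            simpa using hx,
          fun x hx ζ _ hζ => hζ⟩
    | succ n ih =>
        intro hadm'
        obtain ⟨D, hDne, hDmem, hDsat⟩ := ih (fun j hj => hadm' j (Nat.lt_succ_of_lt hj))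
        obtain ⟨p, hp⟩ := hadm' n (Nat.lt_succ_self n)
        have hpR : p ∈ R (a n) := interior_subset hp.1
        have hfpR : f p ∈ R (a (n+1)) := interior_subset hp.2
        have hDR : ∀ x ∈ D, x ∈ R (a n) := by
          intro x hx
          have := hDmem x hx 0 (Nat.zero_le n)
          simpa using this
        refine ⟨{x | f.symm x ∈ D ∧ x ∈ R (a (n+1))}, ?_, ?_, ?_⟩
        · -- nonempty
          obtain ⟨y, hy⟩ := hDne
          have hyR := hDR y hy
          have hd : dist p y < δ := rect_dist_lt hMP hpR hyR
          obtain ⟨hq1, hq2⟩ := br_mem hbr hd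
          set q := br p y with hqdef
          have hqR : q ∈ R (a n) := (hMP.1 (a n)).2.2 p hpR y hyR
          have hqD : q ∈ D := hDsat y hy q (hq2) hqR
          have himg := (hMark (a n) (a (n+1)) p hp).1
          have : f q ∈ epsStable f ε (f p) ∩ R (a (n+1)) :=
            himg (mem_image_of_mem _ ⟨hq1, hqR⟩)
          exact ⟨f q, by simpa using hqD, this.2⟩
        · -- membership property
          rintro x ⟨hx1, hx2⟩ j hj
          match j with
          | 0 => simpa using hx2
          | (j'+1) =>
              have hcast : (-(((j'+1 : ℕ)):ℤ)) = (-(j':ℤ)) - 1 := by push_cast; ring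
              rw [hcast, perm_zpow_apply_sub_one]
              have : n + 1 - (j' + 1) = n - j' := Nat.succ_sub_succ n j'
              rw [this]
              exact hDmem (f.symm x) hx1 j' (Nat.succ_le_succ_iff.mp hj)
        · -- saturation
          rintro x ⟨hx1, hx2⟩ ζ hζu hζR
          refine ⟨?_, hζR⟩
          -- d := f.symm x ∈ D ⊆ R (a n)
          set d := f.symm x with hddef
          have hdD : d ∈ D := hx1
          have hdR : d ∈ R (a n) := hDR d hdD
          -- β := br ζ (f p)
          have hdist : dist ζ (f p) < δ := rect_dist_lt hMP hζR hfpR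
          obtain ⟨hβ1, hβ2⟩ := br_mem hbr hdist
          set β := br ζ (f p) with hβdef
          have hβR : β ∈ R (a (n+1)) := (hMP.1 (a (n+1))).2.2 ζ hζR (f p) hfpR
          have himg := (hMark (a n) (a (n+1)) p hp).2
          obtain ⟨u, ⟨huu, huR⟩, huβ⟩ := himg ⟨hβ2, hβR⟩
          -- z2 := br u d
          have hdist2 : dist u d < δ := rect_dist_lt hMP huR hdR
          obtain ⟨hz1, hz2⟩ := br_mem hbr hdist2
          set z2 := br u d with hz2def
          have hz2R : z2 ∈ R (a n) := (hMP.1 (a n)).2.2 u huR d hdR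
          -- f.symm ζ ∈ epsUnstable f ε d
          have hsymmu : f.symm ζ ∈ epsUnstable f ε d := by
            intro k hk
            have h1 : (f ^ k) d = (f ^ (k-1)) x := by
              rw [perm_zpow_apply_sub_one]
            have h2 : (f ^ k) (f.symm ζ) = (f ^ (k-1)) ζ := by
              rw [perm_zpow_apply_sub_one]
            rw [h1, h2]
            exact hζu (k-1) (by omega)
          -- f.symm ζ = z2 by expansivity
          have heq : f.symm ζ = z2 := by
            apply expansive2 hexp hρ hε
            intro k
            rcases le_or_gt k 0 with hk | hk
            · have hA : dist ((f ^ k) d) ((f ^ k) (f.symm ζ)) ≤ ε := hsymmu k hk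
              have hB : dist ((f ^ k) d) ((f ^ k) z2) ≤ ε := hz2 k hk
              calc dist ((f ^ k) (f.symm ζ)) ((f ^ k) z2)
                  ≤ dist ((f ^ k) (f.symm ζ)) ((f ^ k) d) + dist ((f ^ k) d) ((f ^ k) z2) :=
                    dist_triangle _ _ _
                _ ≤ ε + ε := add_le_add (by rw [dist_comm]; exact hA) hB
                _ = 2*ε := by ring
            · -- k ≥ 1
              have hk1 : (0:ℤ) ≤ k - 1 := by omega
              have hA : dist ((f ^ k) (f.symm ζ)) ((f ^ k) u) ≤ ε := by
                have e1 : (f ^ k) (f.symm ζ) = (f ^ (k-1)) ζ := by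
                  rw [perm_zpow_apply_sub_one]
                have e2 : (f ^ k) u = (f ^ (k-1)) β := by
                  rw [← huβ, perm_zpow_apply_sub_one, Equiv.symm_apply_apply]
                rw [e1, e2]
                exact hβ1 (k-1) hk1
              have hB : dist ((f ^ k) u) ((f ^ k) z2) ≤ ε := hz1 k (by omega)
              calc dist ((f ^ k) (f.symm ζ)) ((f ^ k) z2)
                  ≤ dist ((f ^ k) (f.symm ζ)) ((f ^ k) u) + dist ((f ^ k) u) ((f ^ k) z2) :=
                    dist_triangle _ _ _
                _ ≤ ε + ε := add_le_add hA hB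
                _ = 2*ε := by ring
          have : f.symm ζ ∈ R (a n) := heq ▸ hz2R
          exact hDsat d hdD (f.symm ζ) hsymmu this
  obtain ⟨D, hDne, hDmem, _⟩ := main n hadm
  obtain ⟨y, hy⟩ := hDne
  refine ⟨(f ^ (-(n:ℤ))) y, ?_⟩
  intro j hj
  have hcast : ((j:ℤ)) + (-(n:ℤ)) = -(((n - j : ℕ)):ℤ) := by
    have : ((n - j : ℕ) : ℤ) = (n:ℤ) - j := by
      push_cast [Nat.cast_sub hj]; ring
    omega
  have : (f ^ ((j:ℤ))) ((f ^ (-(n:ℤ))) y) = (f ^ (-((n - j : ℕ):ℤ))) y := by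
    rw [← perm_zpow_apply_add, hcast]
  rw [this]
  have := hDmem y hy (n - j) (Nat.sub_le n j)
  rwa [Nat.sub_sub_self hj] at this

end Main
section Main2

variable {f : Equiv.Perm M} {ρ ε δ : ℝ} {br : M → M → M} {m : ℕ} {R : Fin m → Set M}

lemma exists_realizer (hf : Continuous f) (hf' : Continuous f.symm)
    (hexp : IsExpansiveWith f ρ) (hρ : 0 < ρ) (hε : ε ≤ ρ/4)
    (hbr : ∀ x y : M, dist x y < δ → epsStable f ε x ∩ epsUnstable f ε y = {br x y})
    (hMP : IsMarkovPartition f ε δ br R)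
    (a : ℤ → Fin m)
    (hadm : ∀ i : ℤ, (interior (R (a i)) ∩ ⇑f ⁻¹' interior (R (a (i+1)))).Nonempty) :
    ∃ x : M, ∀ i : ℤ, (f ^ i) x ∈ R (a i) := by
  set K : ℕ → Set M := fun N =>
    ⋂ (i : ℤ), ⋂ (_ : -(N:ℤ) ≤ i ∧ i ≤ N), (fun x => (f ^ i) x) ⁻¹' R (a i) with hK
  have hKmem : ∀ N x, x ∈ K N ↔ ∀ i : ℤ, -(N:ℤ) ≤ i → i ≤ N → (f ^ i) x ∈ R (a i) := by
    intro N x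
    simp only [hK, Set.mem_iInter, Set.mem_preimage]
    constructor
    · intro h i h1 h2; exact h i ⟨h1, h2⟩
    · intro h i hi; exact h i hi.1 hi.2
  have hKclosed : ∀ N, IsClosed (K N) := fun N =>
    isClosed_iInter fun i => isClosed_iInter fun _ =>
      (rect_closed hMP (a i)).preimage (perm_zpow_continuous f hf hf' i)
  have hKdec : ∀ N, K (N+1) ⊆ K N := by
    intro N x hx
    rw [hKmem] at hx ⊢
    intro i h1 h2
    exact hx i (by push_cast; omega) (by push_cast; omega)
  have hKne : ∀ N, (K N).Nonempty := by
    intro N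
    set b : ℕ → Fin m := fun j => a ((j:ℤ) - N) with hb
    have hadm' : ∀ j, j < 2*N →
        (interior (R (b j)) ∩ ⇑f ⁻¹' interior (R (b (j+1)))).Nonempty := by
      intro j _
      have : b (j+1) = a (((j:ℤ) - N) + 1) := by
        simp only [hb]; congr 1; push_cast; ring
      rw [this]
      exact hadm ((j:ℤ) - N)
    obtain ⟨x, hx⟩ := exists_word_realizer hexp hρ hε hbr hMP b (2*N) hadm'
    refine ⟨(f ^ (N:ℤ)) x, ?_⟩
    rw [hKmem]
    intro i h1 h2
    have e1 : (f ^ i) ((f ^ (N:ℤ)) x) = (f ^ (i + N)) x := (perm_zpow_apply_add f i N x).symm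
    set j : ℕ := (i + N).toNat with hj
    have hjz : (j : ℤ) = i + N := Int.toNat_of_nonneg (by omega)
    have hj2 : j ≤ 2*N := by omega
    have := hx j hj2
    rw [hjz] at this
    have hbj : b j = a i := by
      simp only [hb]; congr 1; omega
    rw [e1]
    rwa [hbj] at this
  have hint : (⋂ N, K N).Nonempty :=
    IsCompact.nonempty_iInter_of_sequence_nonempty_isCompact_isClosed K hKdec hKne
      ((hKclosed 0).isCompact) hKclosed
  obtain ⟨x, hx⟩ := hint
  refine ⟨x, fun i => ?_⟩
  have hxN : x ∈ K i.natAbs := Set.mem_iInter.mp hx i.natAbs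
  rw [hKmem] at hxN
  exact hxN i (by omega) (by omega)

lemma realizer_unique (hexp : IsExpansiveWith f ρ) (hdiam : ∀ i, Metric.diam (R i) < ρ)
    (a : ℤ → Fin m) {x y : M}
    (hx : ∀ i : ℤ, (f ^ i) x ∈ R (a i)) (hy : ∀ i : ℤ, (f ^ i) y ∈ R (a i)) : x = y :=
  hexp x y fun i => rect_dist_le_rho hdiam (hx i) (hy i)

lemma uniform_expansive (hf : Continuous f) (hf' : Continuous f.symm)
    (hexp : IsExpansiveWith f ρ) {c : ℝ} (hc : 0 < c) :
    ∃ N : ℕ, ∀ x y : M, (∀ i : ℤ, i.natAbs ≤ N → dist ((f ^ i) x) ((f ^ i) y) ≤ ρ) →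
      dist x y < c := by
  by_contra h
  push_neg at h
  choose x y hxy hcd using h
  obtain ⟨⟨X, Y⟩, -, φ, hφ, hlim⟩ :=
    isCompact_univ.tendsto_subseq (x := fun N => (x N, y N)) (fun N => Set.mem_univ _)
  have hX : Tendsto (fun N => x (φ N)) atTop (𝓝 X) :=
    (continuous_fst.continuousAt (x := (X, Y))).tendsto.comp hlim
  have hY : Tendsto (fun N => y (φ N)) atTop (𝓝 Y) :=
    (continuous_snd.continuousAt (x := (X, Y))).tendsto.comp hlim
  have hle : ∀ i : ℤ, dist ((f ^ i) X) ((f ^ i) Y) ≤ ρ := by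
    intro i
    have hc1 := (perm_zpow_continuous f hf hf' i)
    have htend : Tendsto (fun N => dist ((f ^ i) (x (φ N))) ((f ^ i) (y (φ N)))) atTop
        (𝓝 (dist ((f ^ i) X) ((f ^ i) Y))) :=
      ((hc1.continuousAt.tendsto.comp hX).dist (hc1.continuousAt.tendsto.comp hY))
    apply le_of_tendsto htend
    filter_upwards [eventually_ge_atTop i.natAbs] with N hN
    exact hxy (φ N) i (le_trans hN (hφ.le_apply))
  have hXY : X = Y := hexp X Y hle
  have htend2 : Tendsto (fun N => dist (x (φ N)) (y (φ N))) atTop (𝓝 (dist X Y)) :=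
    hX.dist hY
  have : c ≤ dist X Y := ge_of_tendsto htend2 (Filter.Eventually.of_forall fun N => hcd (φ N))
  rw [hXY, dist_self] at this
  linarith

end Main2
section Main3

variable {f : Equiv.Perm M} {ρ ε δ : ℝ} {br : M → M → M} {m : ℕ} {R : Fin m → Set M}

lemma perm_zpow_symm_eq (f : Equiv.Perm M) (n : ℤ) : (f ^ n).symm = f ^ (-n) := by
  rw [← Equiv.Perm.inv_def, ← zpow_neg]

lemma perm_zpow_symm_continuous (f : Equiv.Perm M) (hf : Continuous f)
    (hf' : Continuous f.symm) (n : ℤ) : Continuous ⇑(f ^ n).symm := by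
  rw [perm_zpow_symm_eq]; exact perm_zpow_continuous f hf hf' (-n)

/-- The set of points whose orbit avoids all rectangle frontiers is dense. -/
lemma dense_good (hf : Continuous f) (hf' : Continuous f.symm)
    (hMP : IsMarkovPartition f ε δ br R) :
    Dense {x : M | ∀ n : ℤ, ∀ i, (f ^ n) x ∉ frontier (R i)} := by
  have hea : {x : M | ∀ n : ℤ, ∀ i, (f ^ n) x ∉ frontier (R i)} =
      ⋂ p : ℤ × Fin m, (fun x => (f ^ p.1) x) ⁻¹' (frontier (R p.2))ᶜ := by
    ext x
    simp only [Set.mem_iInter, Set.mem_setOf_eq, Set.mem_preimage, Set.mem_compl_iff]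
    exact ⟨fun h p => h p.1 p.2, fun h n i => h (n, i)⟩
  rw [hea]
  apply dense_iInter_of_isOpen
  · rintro ⟨n, i⟩
    exact (isClosed_frontier.preimage (perm_zpow_continuous f hf hf' n)).isOpen_compl
  · rintro ⟨n, i⟩
    have hd : Dense (frontier (R i))ᶜ :=
      interior_eq_empty_iff_dense_compl.mp (interior_frontier (rect_closed hMP i))
    have hom : IsOpenMap ⇑(f ^ n) :=
      (Homeomorph.mk (f ^ n) (perm_zpow_continuous f hf hf' n)
        (perm_zpow_symm_continuous f hf hf' n)).isOpenMap
    exact hd.preimage hom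

/-- Every point admits an admissible itinerary that it realises. -/
lemma exists_itinerary (hf : Continuous f) (hf' : Continuous f.symm)
    (hMP : IsMarkovPartition f ε δ br R) (x : M) :
    ∃ a : ℤ → Fin m,
      (∀ i : ℤ, (interior (R (a i)) ∩ ⇑f ⁻¹' interior (R (a (i+1)))).Nonempty) ∧
      (∀ i : ℤ, (f ^ i) x ∈ R (a i)) := by
  classical
  have hgood : ∀ y : M, (∀ n : ℤ, ∀ i, (f ^ n) y ∉ frontier (R i)) →
      ∃ b : ℤ → Fin m, ∀ n : ℤ, (f ^ n) y ∈ interior (R (b n)) := by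
    intro y hy
    have h1 : ∀ n : ℤ, ∃ i, (f ^ n) y ∈ interior (R i) := by
      intro n
      have : (f ^ n) y ∈ ⋃ i, R i := by rw [hMP.2.2.1]; exact Set.mem_univ _
      obtain ⟨i, hi⟩ := Set.mem_iUnion.mp this
      refine ⟨i, ?_⟩
      have hfr := hy n i
      rw [(rect_closed hMP i).frontier_eq] at hfr
      by_contra hint
      exact hfr ⟨hi, hint⟩
    choose b hb using h1
    exact ⟨b, hb⟩
  -- approximating sequence of good points
  have hdense := dense_good hf hf' hMP
  have hseq : ∀ k : ℕ, ∃ y : M, (∀ n : ℤ, ∀ i, (f ^ n) y ∉ frontier (R i)) ∧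
      dist x y < 1/(k+1) := by
    intro k
    obtain ⟨y, hy1, hy2⟩ := hdense.exists_dist_lt x (by positivity : (0:ℝ) < 1/(k+1))
    exact ⟨y, hy1, hy2⟩
  choose y hy hyd using hseq
  choose b hb using fun k => hgood (y k) (hy k)
  -- cluster point of the itineraries
  obtain ⟨a, ha⟩ := exists_clusterPt_of_compactSpace (Filter.map b Filter.atTop)
  have hfreq : ∀ s ∈ 𝓝 a, ∃ᶠ k in Filter.atTop, b k ∈ s := mapClusterPt_iff_frequently.mp ha
  have hwin : ∀ J : Finset ℤ, ∃ᶠ k in Filter.atTop, ∀ i ∈ J, b k i = a i := by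
    intro J
    have hV : IsOpen {c : ℤ → Fin m | ∀ i ∈ J, c i = a i} := by
      have : {c : ℤ → Fin m | ∀ i ∈ J, c i = a i} =
          ⋂ i ∈ J, (fun c : ℤ → Fin m => c i) ⁻¹' {a i} := by
        ext c; simp
      rw [this]
      exact isOpen_biInter_finset fun i _ =>
        (continuous_apply i).isOpen_preimage _ (isOpen_discrete _)
    exact hfreq _ (hV.mem_nhds (by simp))
  refine ⟨a, ?_, ?_⟩
  · -- admissibility
    intro i
    obtain ⟨k, hk⟩ := (hwin {i, i+1}).exists
    have h1 : b k i = a i := hk i (by simp)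
    have h2 : b k (i+1) = a (i+1) := hk (i+1) (by simp)
    refine ⟨(f ^ i) (y k), ?_, ?_⟩
    · rw [← h1]; exact hb k i
    · show f ((f ^ i) (y k)) ∈ interior (R (a (i+1)))
      rw [← h2, ← perm_zpow_apply_one_add]
      exact hb k (i+1)
  · -- realisation
    intro i
    rw [← (rect_closed hMP (a i)).closure_eq]
    rw [Metric.mem_closure_iff]
    intro c hc
    obtain ⟨η, hη, hcont⟩ := Metric.continuous_iff.mp (perm_zpow_continuous f hf hf' i) x c hc
    obtain ⟨K, hK⟩ := exists_nat_one_div_lt hη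
    obtain ⟨k, hkK, hki⟩ := (Filter.frequently_atTop.mp (hwin {i})) K
    have h1 : b k i = a i := hki i (by simp)
    have hdk : dist x (y k) < η := by
      have h2 : (1:ℝ)/(k+1) ≤ 1/(K+1) := by
        apply one_div_le_one_div_of_le
        · positivity
        · exact_mod_cast Nat.succ_le_succ hkK
      calc dist x (y k) < 1/(k+1) := hyd k
        _ ≤ 1/(K+1) := h2
        _ < η := by exact_mod_cast hK
    refine ⟨(f ^ i) (y k), ?_, ?_⟩
    · rw [← h1]; exact interior_subset (hb k i)
    · rw [dist_comm] at hdk ⊢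
      exact hcont (y k) hdk
end Main3

end Stmt19Aux

/-- For a Markov partition of diameter less than `ρ` with transition matrix `A`:
(1) for every `a ∈ Σ_A` the intersection `⋂_{j∈ℤ} f^{-j}(R_{a_j})` consists of exactly one
point `π(a)`; (2) the resulting map `π : Σ_A → M` (any map with the defining property) is
continuous, surjective and satisfies `π ∘ σ = f ∘ π`; (3) `π` is injective over points whose
orbit avoids the border `⋃ ∂R_i` of the partition. -/
theorem stmt_19 (f : Equiv.Perm M) (hf : Continuous ⇑f) (hf' : Continuous ⇑f.symm)
    (ρ ε δ : ℝ) (hρ : 0 < ρ) (hexp : IsExpansiveWith f ρ)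
    (hε0 : 0 < ε) (hε : ε ≤ ρ / 4) (hδ : 0 < δ) (br : M → M → M)
    (hbr : ∀ x y : M, dist x y < δ → epsStable f ε x ∩ epsUnstable f ε y = {br x y})
    {m : ℕ} (R : Fin m → Set M) (hMP : IsMarkovPartition f ε δ br R)
    (hdiam : ∀ i, Metric.diam (R i) < ρ) :
    (∀ a : ℤ → Fin m,
      (∀ i : ℤ, (interior (R (a i)) ∩ ⇑f ⁻¹' interior (R (a (i + 1)))).Nonempty) →
      ∃! x : M, ∀ j : ℤ, (f ^ j) x ∈ R (a j)) ∧
    ∀ π : {a : ℤ → Fin m //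
        ∀ i : ℤ, (interior (R (a i)) ∩ ⇑f ⁻¹' interior (R (a (i + 1)))).Nonempty} → M,
      (∀ a, ∀ j : ℤ, (f ^ j) (π a) ∈ R (a.1 j)) →
      Continuous π ∧
      Function.Surjective π ∧
      (∀ a, π ⟨fun n => a.1 (n + 1), fun i => a.2 (i + 1)⟩ = f (π a)) ∧
      ∀ a a', π a = π a' → (∀ n : ℤ, (f ^ n) (π a) ∉ ⋃ i, frontier (R i)) → a = a'  := by
  classical
  have huniq : ∀ (a : ℤ → Fin m) (x y : M), (∀ j : ℤ, (f ^ j) x ∈ R (a j)) →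
      (∀ j : ℤ, (f ^ j) y ∈ R (a j)) → x = y :=
    fun a x y hx hy => realizer_unique hexp hdiam a hx hy
  constructor
  · intro a hadm
    obtain ⟨x, hx⟩ := exists_realizer hf hf' hexp hρ hε hbr hMP a hadm
    exact ⟨x, hx, fun y hy => huniq a y x hy hx⟩
  · intro π hπ
    refine ⟨?_, ?_, ?_, ?_⟩
    · -- continuity
      rw [continuous_iff_continuousAt]
      intro aa
      rw [ContinuousAt, Metric.tendsto_nhds]
      intro c hc
      obtain ⟨N, hN⟩ := uniform_expansive hf hf' hexp hc
      have hWopen : IsOpen {c : ℤ → Fin m | ∀ i ∈ Finset.Icc (-(N:ℤ)) (N:ℤ), c i = aa.1 i} := by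
        have : {c : ℤ → Fin m | ∀ i ∈ Finset.Icc (-(N:ℤ)) (N:ℤ), c i = aa.1 i} =
            ⋂ i ∈ Finset.Icc (-(N:ℤ)) (N:ℤ), (fun c : ℤ → Fin m => c i) ⁻¹' {aa.1 i} := by
          ext c; simp
        rw [this]
        exact isOpen_biInter_finset fun i _ =>
          (continuous_apply i).isOpen_preimage _ (isOpen_discrete _)
      have hVnhds : (Subtype.val ⁻¹'
          {c : ℤ → Fin m | ∀ i ∈ Finset.Icc (-(N:ℤ)) (N:ℤ), c i = aa.1 i}) ∈ 𝓝 aa :=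
        (hWopen.preimage continuous_subtype_val).mem_nhds (by simp)
      filter_upwards [hVnhds] with b hb
      apply hN
      intro i hi
      have hieq : b.1 i = aa.1 i := hb i (by simp only [Finset.mem_Icc]; omega)
      have h1 : (f ^ i) (π b) ∈ R (aa.1 i) := by rw [← hieq]; exact hπ b i
      exact rect_dist_le_rho hdiam h1 (hπ aa i)
    · -- surjectivity
      intro x
      obtain ⟨a, hadm, hreal⟩ := exists_itinerary hf hf' hMP x
      exact ⟨⟨a, hadm⟩, huniq a _ x (hπ ⟨a, hadm⟩) hreal⟩
    · -- equivariance
      intro a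
      apply huniq (fun n => a.1 (n+1))
      · intro j; exact hπ ⟨fun n => a.1 (n+1), fun i => a.2 (i+1)⟩ j
      · intro j
        rw [← perm_zpow_apply_add_one]
        exact hπ a (j+1)
    · -- injectivity off the border
      intro a a' hpi hav
      have key : ∀ n : ℤ, a.1 n = a'.1 n := by
        intro n
        have hmem1 : (f ^ n) (π a) ∈ R (a.1 n) := hπ a n
        have hmem2 : (f ^ n) (π a) ∈ R (a'.1 n) := by rw [hpi]; exact hπ a' n
        have hfr : ∀ i, (f ^ n) (π a) ∉ frontier (R i) := by
          intro i hi
          exact hav n (Set.mem_iUnion.mpr ⟨i, hi⟩)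
        have hint1 : (f ^ n) (π a) ∈ interior (R (a.1 n)) := by
          have := hfr (a.1 n)
          rw [(rect_closed hMP (a.1 n)).frontier_eq] at this
          by_contra hcon
          exact this ⟨hmem1, hcon⟩
        have hint2 : (f ^ n) (π a) ∈ interior (R (a'.1 n)) := by
          have := hfr (a'.1 n)
          rw [(rect_closed hMP (a'.1 n)).frontier_eq] at this
          by_contra hcon
          exact this ⟨hmem2, hcon⟩
        by_contra hne
        have := hMP.2.2.2.1 (a.1 n) (a'.1 n) hne
        exact absurd (this ▸ (Set.mem_inter hint1 hint2)) (Set.notMem_empty _)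
      exact Subtype.ext (funext key)
end
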